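/- Let G be a finite group acting doubly transitively on a finite set X with |X| ≥ 2, and let H ≤ G be a subgroup with index [G:H] < |X|. Then H acts transitively on X. -/

import Mathlib

noncomputable section

/-- a subgroup of index smaller than `|X|` of a finite group acting doubly
transitively on a finite set `X` with `|X| ≥ 2` acts transitively on `X`. -/
theorem transitive_of_index_lt_card_of_two_transitive
    (G : Type*) [Group G] [Finite G] (X : Type*) [Finite X] [MulAction G X]
    (hcard : 2 ≤ Nat.card X)
    (h2trans : ∀ x₁ x₂ y₁ y₂ : X, x₁ ≠ x₂ → y₁ ≠ y₂ →
        ∃ g : G, g • x₁ = y₁ ∧ g • x₂ = y₂)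
    (H : Subgroup G) (hH : H.index < Nat.card X) :
    ∀ x y : X, ∃ h ∈ H, h • x = y := by
  classical
  haveI : Fintype X := Fintype.ofFinite X
  haveI : Fintype G := Fintype.ofFinite G
  haveI : Fintype (G ⧸ H) := Fintype.ofFinite _
  haveI hnontriv : Nontrivial X := Finite.one_lt_card_iff_nontrivial.mp (by omega)
  have htrans : ∀ x y : X, ∃ g : G, g • x = y := by
    intro x y
    rcases eq_or_ne x y with rfl | hxy
    · exact ⟨1, one_smul _ _⟩
    · obtain ⟨z, hz⟩ := exists_ne x
      obtain ⟨w, hw⟩ := exists_ne y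
      obtain ⟨g, hg1, -⟩ := h2trans x z y w (Ne.symm hz) (Ne.symm hw)
      exact ⟨g, hg1⟩
  by_contra hcon
  push_neg at hcon
  obtain ⟨x₀, y₀, hxy₀⟩ := hcon
  set O : Set X := {z | ∃ h, h ∈ H ∧ h • x₀ = z} with hO_def
  have hx₀O : x₀ ∈ O := ⟨1, H.one_mem, one_smul _ _⟩
  have hy₀O : y₀ ∉ O := by rintro ⟨h, hh, he⟩; exact hxy₀ h hh he
  have hOinv : ∀ h : G, h ∈ H → ∀ z : X, h • z ∈ O ↔ z ∈ O := by
    intro h hh z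
    constructor
    · rintro ⟨h', hh', he⟩
      exact ⟨h⁻¹ * h', H.mul_mem (H.inv_mem hh) hh', by rw [mul_smul, he, inv_smul_smul]⟩
    · rintro ⟨h', hh', rfl⟩
      exact ⟨h * h', H.mul_mem hh hh', mul_smul h h' x₀⟩
  -- the linear map
  let T : (X → ℚ) →ₗ[ℚ] ((G ⧸ H) → ℚ) :=
    { toFun := fun f q => ∑ z : X, if (Quotient.out q)⁻¹ • z ∈ O then f z else 0
      map_add' := by
        intro f g
        funext q
        show (∑ z : X, if (Quotient.out q)⁻¹ • z ∈ O then (f + g) z else 0)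
            = (∑ z : X, if (Quotient.out q)⁻¹ • z ∈ O then f z else 0)
              + ∑ z : X, if (Quotient.out q)⁻¹ • z ∈ O then g z else 0
        rw [← Finset.sum_add_distrib]
        refine Finset.sum_congr rfl fun z _ => ?_
        by_cases hz : (Quotient.out q)⁻¹ • z ∈ O <;> simp [hz]
      map_smul' := by
        intro c f
        funext q
        show (∑ z : X, if (Quotient.out q)⁻¹ • z ∈ O then (c • f) z else 0)
            = c * ∑ z : X, if (Quotient.out q)⁻¹ • z ∈ O then f z else 0
        rw [Finset.mul_sum]
        refine Finset.sum_congr rfl fun z _ => ?_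
        by_cases hz : (Quotient.out q)⁻¹ • z ∈ O <;> simp [hz] }
  obtain ⟨f, hfne, hTf⟩ : ∃ f : X → ℚ, f ≠ 0 ∧ T f = 0 := by
    have hninj : ¬ Function.Injective T := by
      intro hinj
      have h1 := LinearMap.finrank_le_finrank_of_injective hinj
      rw [Module.finrank_pi, Module.finrank_pi] at h1
      have h2 : Fintype.card (G ⧸ H) < Fintype.card X := by
        rw [← Nat.card_eq_fintype_card (α := G ⧸ H), ← Nat.card_eq_fintype_card (α := X),
          ← Subgroup.index_eq_card]
        exact hH
      omega
    rw [← LinearMap.ker_eq_bot] at hninj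
    obtain ⟨f, hfmem, hfne⟩ := (Submodule.ne_bot_iff _).mp hninj
    exact ⟨f, hfne, LinearMap.mem_ker.mp hfmem⟩
  have hker : ∀ γ : G, (∑ z : X, if γ⁻¹ • z ∈ O then f z else 0) = 0 := by
    intro γ
    have h1 := congrFun hTf (QuotientGroup.mk γ)
    simp only [T, LinearMap.coe_mk, AddHom.coe_mk, Pi.zero_apply] at h1
    obtain ⟨h, hout⟩ := QuotientGroup.mk_out_eq_mul H γ
    refine Eq.trans (Finset.sum_congr rfl fun z _ => if_congr ?_ rfl rfl) h1
    rw [hout, mul_inv_rev, mul_smul]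
    exact (hOinv _ (H.inv_mem (SetLike.coe_mem h)) _).symm
  obtain ⟨a, hfa⟩ : ∃ a, f a ≠ 0 := by
    by_contra hc
    push_neg at hc
    exact hfne (funext fun z => hc z)
  obtain ⟨c₀, hc₀⟩ := exists_ne a
  obtain ⟨z₀, hz₀⟩ := exists_ne y₀
  -- counting lemma
  set t : ℕ := (Finset.univ.filter fun g : G => g • a = y₀ ∧ g • c₀ = z₀).card with ht_def
  have ht : 0 < t := by
    obtain ⟨g, hg1, hg2⟩ := h2trans a c₀ y₀ z₀ (Ne.symm hc₀) (Ne.symm hz₀)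
    exact Finset.card_pos.mpr ⟨g, by simp [hg1, hg2]⟩
  have hN : ∀ c z : X, c ≠ a → z ≠ y₀ →
      (Finset.univ.filter fun g : G => g • a = y₀ ∧ g • c = z).card = t := by
    intro c z hc hz
    have step1 : (Finset.univ.filter fun g : G => g • a = y₀ ∧ g • c = z).card
        = (Finset.univ.filter fun g : G => g • a = y₀ ∧ g • c₀ = z).card := by
      obtain ⟨u, hu1, hu2⟩ := h2trans a c₀ a c (Ne.symm hc₀) (Ne.symm hc)
      have hu1' : u⁻¹ • a = a := inv_smul_eq_iff.mpr hu1.symm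
      have hu2' : u⁻¹ • c = c₀ := inv_smul_eq_iff.mpr hu2.symm
      refine Finset.card_bij' (fun g _ => g * u) (fun g _ => g * u⁻¹) ?_ ?_ ?_ ?_
      · intro g hg
        simp only [Finset.mem_filter, Finset.mem_univ, true_and] at hg ⊢
        rw [mul_smul, mul_smul, hu1, hu2]
        exact hg
      · intro g hg
        simp only [Finset.mem_filter, Finset.mem_univ, true_and] at hg ⊢
        rw [mul_smul, mul_smul, hu1', hu2']
        exact hg
      · intro g _; exact mul_inv_cancel_right g u
      · intro g _; exact inv_mul_cancel_right g u
    have step2 : (Finset.univ.filter fun g : G => g • a = y₀ ∧ g • c₀ = z).card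
        = (Finset.univ.filter fun g : G => g • a = y₀ ∧ g • c₀ = z₀).card := by
      obtain ⟨v, hv1, hv2⟩ := h2trans y₀ z₀ y₀ z (Ne.symm hz₀) (Ne.symm hz)
      have hv1' : v⁻¹ • y₀ = y₀ := inv_smul_eq_iff.mpr hv1.symm
      have hv2' : v⁻¹ • z = z₀ := inv_smul_eq_iff.mpr hv2.symm
      refine Finset.card_bij' (fun g _ => v⁻¹ * g) (fun g _ => v * g) ?_ ?_ ?_ ?_
      · intro g hg
        simp only [Finset.mem_filter, Finset.mem_univ, true_and] at hg ⊢
        rw [mul_smul, mul_smul, hg.1, hg.2, hv1', hv2']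
        exact ⟨rfl, rfl⟩
      · intro g hg
        simp only [Finset.mem_filter, Finset.mem_univ, true_and] at hg ⊢
        rw [mul_smul, mul_smul, hg.1, hg.2, hv1, hv2]
        exact ⟨rfl, rfl⟩
      · intro g _; exact mul_inv_cancel_left v g
      · intro g _; exact inv_mul_cancel_left v g
    rw [step1, step2]
  -- the averaged function
  set P : X → ℚ := fun z => ∑ g : G, if g • a = y₀ then f (g⁻¹ • z) else 0 with hP_def
  have hPapp : ∀ z : X, P z = ∑ g : G, if g • a = y₀ then f (g⁻¹ • z) else 0 := fun z => rfl
  set s : ℕ := (Finset.univ.filter fun g : G => g • a = y₀).card with hs_def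
  have hs : 0 < s := by
    obtain ⟨g, hg⟩ := htrans a y₀
    exact Finset.card_pos.mpr ⟨g, by simp [hg]⟩
  have hPx : P y₀ = (s : ℚ) * f a := by
    rw [hPapp y₀]
    have h1 : ∀ g : G, (if g • a = y₀ then f (g⁻¹ • y₀) else 0) = (if g • a = y₀ then f a else 0) := by
      intro g
      split_ifs with hg
      · rw [show g⁻¹ • y₀ = a from by rw [← hg, inv_smul_smul]]
      · rfl
    rw [Finset.sum_congr rfl fun g _ => h1 g, ← Finset.sum_filter, Finset.sum_const,
      nsmul_eq_mul, hs_def]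
  have hPz : ∀ z : X, z ≠ y₀ → P z = (t : ℚ) * ((∑ w : X, f w) - f a) := by
    intro z hz
    have inner : ∀ g : G, (if g • a = y₀ then f (g⁻¹ • z) else 0)
        = ∑ c : X, if (g • a = y₀ ∧ g • c = z) then f c else 0 := by
      intro g
      by_cases hg : g • a = y₀
      · rw [if_pos hg]
        have hcond : ∀ c : X, (g • a = y₀ ∧ g • c = z) ↔ (c = g⁻¹ • z) := fun c =>
          ⟨fun hcc => eq_inv_smul_iff.mpr hcc.2, fun hcc => ⟨hg, eq_inv_smul_iff.mp hcc⟩⟩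
        calc f (g⁻¹ • z) = ∑ c : X, if c = g⁻¹ • z then f c else 0 := by
              rw [Finset.sum_ite_eq' Finset.univ (g⁻¹ • z) f, if_pos (Finset.mem_univ _)]
          _ = ∑ c : X, if (g • a = y₀ ∧ g • c = z) then f c else 0 :=
              Finset.sum_congr rfl fun c _ => (if_congr (hcond c) rfl rfl).symm
      · rw [if_neg hg]
        exact (Finset.sum_eq_zero fun c _ => if_neg (fun hcc => hg hcc.1)).symm
    have hswap : P z = ∑ c : X, ∑ g : G, if (g • a = y₀ ∧ g • c = z) then f c else 0 := by
      rw [hPapp z, Finset.sum_congr rfl fun g _ => inner g]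
      exact Finset.sum_comm
    have hNa : (Finset.univ.filter fun g : G => g • a = y₀ ∧ g • a = z).card = 0 := by
      rw [Finset.card_eq_zero, Finset.filter_eq_empty_iff]
      rintro g - ⟨hg1, hg2⟩
      exact hz (hg2.symm.trans hg1)
    have hinner2 : ∀ c : X, (∑ g : G, if (g • a = y₀ ∧ g • c = z) then f c else 0)
        = ((Finset.univ.filter fun g : G => g • a = y₀ ∧ g • c = z).card : ℚ) * f c := by
      intro c
      rw [← Finset.sum_filter, Finset.sum_const, nsmul_eq_mul]
    rw [hswap, Finset.sum_congr rfl fun c _ => hinner2 c]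
    calc ∑ c : X, ((Finset.univ.filter fun g : G => g • a = y₀ ∧ g • c = z).card : ℚ) * f c
        = ∑ c ∈ Finset.univ.erase a,
            ((Finset.univ.filter fun g : G => g • a = y₀ ∧ g • c = z).card : ℚ) * f c := by
          rw [← Finset.sum_erase_add _ _ (Finset.mem_univ a), hNa]
          simp
      _ = ∑ c ∈ Finset.univ.erase a, (t : ℚ) * f c := by
          refine Finset.sum_congr rfl fun c hc => ?_
          rw [hN c z (Finset.ne_of_mem_erase hc) hz]
      _ = (t : ℚ) * ∑ c ∈ Finset.univ.erase a, f c := by rw [Finset.mul_sum]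
      _ = (t : ℚ) * ((∑ w : X, f w) - f a) := by
          rw [Finset.sum_erase_eq_sub (Finset.mem_univ a)]
  -- P is in the kernel
  have hPker : ∀ γ : G, (∑ z : X, if γ⁻¹ • z ∈ O then P z else 0) = 0 := by
    intro γ
    have hterm : ∀ g : G,
        (∑ z : X, if γ⁻¹ • z ∈ O then (if g • a = y₀ then f (g⁻¹ • z) else 0) else 0) = 0 := by
      intro g
      by_cases hg : g • a = y₀
      · simp only [hg, if_true]
        calc ∑ z : X, (if γ⁻¹ • z ∈ O then f (g⁻¹ • z) else 0)
            = ∑ w : X, (if (g⁻¹ * γ)⁻¹ • w ∈ O then f w else 0) := by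
              refine Fintype.sum_equiv (MulAction.toPerm g⁻¹) _ _ fun z => ?_
              simp only [MulAction.toPerm_apply]
              have hsm : (g⁻¹ * γ)⁻¹ • (g⁻¹ • z) = γ⁻¹ • z := by
                rw [mul_inv_rev, inv_inv, mul_smul, smul_inv_smul]
              rw [hsm]
          _ = 0 := hker (g⁻¹ * γ)
      · simp [hg]
    calc ∑ z : X, (if γ⁻¹ • z ∈ O then P z else 0)
        = ∑ z : X, ∑ g : G, (if γ⁻¹ • z ∈ O then (if g • a = y₀ then f (g⁻¹ • z) else 0) else 0) := by
          refine Finset.sum_congr rfl fun z _ => ?_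
          by_cases hz : γ⁻¹ • z ∈ O
          · simp only [hz, if_true]
            exact hPapp z
          · simp [hz]
      _ = ∑ g : G, ∑ z : X, (if γ⁻¹ • z ∈ O then (if g • a = y₀ then f (g⁻¹ • z) else 0) else 0) :=
          Finset.sum_comm
      _ = 0 := Finset.sum_eq_zero fun g _ => hterm g
  -- first equation : evaluate at the trivial coset
  have hE2 : (t : ℚ) * ((∑ w : X, f w) - f a) = 0 := by
    have h1 : ∑ z ∈ Finset.univ.filter (fun z : X => z ∈ O), P z = 0 := by
      rw [Finset.sum_filter]
      simpa using hPker 1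
    have h2 : ∑ z ∈ Finset.univ.filter (fun z : X => z ∈ O), P z
        = (Finset.univ.filter (fun z : X => z ∈ O)).card • ((t : ℚ) * ((∑ w : X, f w) - f a)) := by
      rw [Finset.sum_congr rfl fun z hz =>
        hPz z (fun he => hy₀O (he ▸ (Finset.mem_filter.mp hz).2)), Finset.sum_const]
    have hcardpos : 0 < (Finset.univ.filter (fun z : X => z ∈ O)).card :=
      Finset.card_pos.mpr ⟨x₀, by simp [hx₀O]⟩
    rw [h1, nsmul_eq_mul] at h2
    rcases mul_eq_zero.mp h2.symm with h | h
    · exact absurd (Nat.cast_eq_zero.mp h) hcardpos.ne'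
    · exact h
  -- second equation : evaluate at a coset moving x₀ to y₀
  obtain ⟨g₁, hg₁⟩ := htrans x₀ y₀
  have hy₀mem : y₀ ∈ Finset.univ.filter (fun z : X => g₁⁻¹ • z ∈ O) := by
    have hx : g₁⁻¹ • y₀ = x₀ := by rw [← hg₁, inv_smul_smul]
    simp [hx, hx₀O]
  have h1 : ∑ z ∈ Finset.univ.filter (fun z : X => g₁⁻¹ • z ∈ O), P z = 0 := by
    rw [Finset.sum_filter]
    exact hPker g₁
  rw [← Finset.sum_erase_add _ _ hy₀mem] at h1
  have h2 : ∑ z ∈ (Finset.univ.filter (fun z : X => g₁⁻¹ • z ∈ O)).erase y₀, P z = 0 := by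
    refine Finset.sum_eq_zero fun z hz => ?_
    rw [hPz z (Finset.ne_of_mem_erase hz)]
    exact hE2
  rw [h2, zero_add, hPx] at h1
  rcases mul_eq_zero.mp h1 with h | h
  · exact absurd (Nat.cast_eq_zero.mp h) hs.ne'
  · exact hfa h


end
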